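/- Let T be a tree, X ⊆ V(T), and let P̃ be a partition of X that is the projection onto X of a partition of V(proj(T,X)) crossed by at most c edges of proj(T,X). Then P̃ is the projection onto X of a partition of V(T) crossed by at most c edges of T. -/

import Mathlib

open SimpleGraph

/-- One step of the projection procedure: either delete a leaf not in `X`,
or smooth (suppress) a degree-2 vertex not in `X`. -/
inductive ProjStep {V : Type} (X : Set V) : SimpleGraph V → SimpleGraph V → Prop
  | deleteLeaf (G : SimpleGraph V) (v : V) (hv : v ∉ X)
      (hdeg : (G.neighborSet v).ncard = 1) :
      ProjStep X G (SimpleGraph.fromEdgeSet (G.edgeSet \ {e | v ∈ e}))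
  | smooth (G : SimpleGraph V) (v a b : V) (hv : v ∉ X)
      (hdeg : (G.neighborSet v).ncard = 2) (ha : G.Adj v a) (hb : G.Adj v b) (hab : a ≠ b) :
      ProjStep X G (SimpleGraph.fromEdgeSet ((G.edgeSet \ {e | v ∈ e}) ∪ {s(a, b)}))

/-- The set of edges of `G` crossing the partition (setoid) `R`. -/
def crossingEdges {V : Type} (G : SimpleGraph V) (R : Setoid V) : Set (Sym2 V) :=
  {e | e ∈ G.edgeSet ∧ ∃ a b : V, e = s(a, b) ∧ ¬ R.r a b}

section Aux

variable {V : Type}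

private lemma reach_trans {G G' : SimpleGraph V}
    (h : ∀ p q : V, G.Adj p q → G'.Reachable p q) {x y : V} (hr : G.Reachable x y) :
    G'.Reachable x y := by
  obtain ⟨w⟩ := hr
  induction w with
  | nil => exact Reachable.refl _
  | cons hadj _ ih => exact (h _ _ hadj).trans ih

private lemma sdiff_single_adj {G : SimpleGraph V} {x y p q : V} (hadj : G.Adj p q)
    (hne : s(p, q) ≠ s(x, y)) : (G \ fromEdgeSet {s(x, y)}).Adj p q := by
  rw [sdiff_adj, fromEdgeSet_adj]
  exact ⟨hadj, fun h => hne h.1⟩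

private lemma acyclic_deleteLeaf {G : SimpleGraph V} (v : V) (hG : G.IsAcyclic) :
    (fromEdgeSet (G.edgeSet \ {e | v ∈ e})).IsAcyclic := by
  have hle : fromEdgeSet (G.edgeSet \ {e | v ∈ e}) ≤ G := by
    intro p q hpq
    rw [fromEdgeSet_adj] at hpq
    exact hpq.1.1
  rw [isAcyclic_iff_forall_adj_isBridge]
  intro x y hxy
  have hGb := (isAcyclic_iff_forall_adj_isBridge.1 hG) (hle hxy)
  rw [isBridge_iff] at hGb ⊢
  refine fun hr => hGb ?_
  refine reach_trans (fun p q h => ?_) hr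
  rw [deleteEdges, sdiff_adj] at h
  exact Adj.reachable (by rw [deleteEdges, sdiff_adj]; exact ⟨hle h.1, h.2⟩)

private lemma not_adj_of_acyclic {G : SimpleGraph V} {v a b : V} (ha : G.Adj v a)
    (hb : G.Adj v b) (hab : a ≠ b) (hG : G.IsAcyclic) : ¬ G.Adj a b := by
  intro hadj
  have hGb := (isAcyclic_iff_forall_adj_isBridge.1 hG) ha
  rw [isBridge_iff] at hGb
  apply hGb
  have h1 : (G \ fromEdgeSet {s(v, a)}).Adj v b := by
    refine sdiff_single_adj hb fun h => ?_
    rw [Sym2.eq_iff] at h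
    rcases h with ⟨_, rfl⟩ | ⟨h1, _⟩
    · exact hab rfl
    · exact ha.ne' h1.symm
  have h2 : (G \ fromEdgeSet {s(v, a)}).Adj b a := by
    refine sdiff_single_adj hadj.symm fun h => ?_
    rw [Sym2.eq_iff] at h
    rcases h with ⟨h1, _⟩ | ⟨h1, _⟩
    · exact hb.ne' h1
    · exact hab h1.symm
  exact h1.reachable.trans h2.reachable

private lemma acyclic_smooth {G : SimpleGraph V} {v a b : V} (ha : G.Adj v a)
    (hb : G.Adj v b) (hab : a ≠ b) (hG : G.IsAcyclic) :
    (fromEdgeSet ((G.edgeSet \ {e | v ∈ e}) ∪ {s(a, b)})).IsAcyclic := by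
  set H := fromEdgeSet ((G.edgeSet \ {e | v ∈ e}) ∪ {s(a, b)}) with hH
  have hadjH : ∀ p q : V, H.Adj p q → (G.Adj p q ∧ v ≠ p ∧ v ≠ q) ∨ s(p, q) = s(a, b) := by
    intro p q h
    rw [hH, fromEdgeSet_adj] at h
    rcases h.1 with ⟨hm, hvm⟩ | hm
    · left
      refine ⟨hm, ?_, ?_⟩
      · rintro rfl; exact hvm (Sym2.mem_mk_left _ _)
      · rintro rfl; exact hvm (Sym2.mem_mk_right _ _)
    · right; exact hm
  rw [isAcyclic_iff_forall_adj_isBridge]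
  intro x y hxy
  rw [isBridge_iff]
  refine fun hr => ?_
  rcases hadjH x y hxy with ⟨hxyG, hvx, hvy⟩ | hxyab
  · have hGb := (isAcyclic_iff_forall_adj_isBridge.1 hG) hxyG
    rw [isBridge_iff] at hGb
    apply hGb
    have hvne : ∀ w : V, s(v, w) ≠ s(x, y) := by
      intro w h
      rw [Sym2.eq_iff] at h
      rcases h with ⟨h1, _⟩ | ⟨h1, _⟩
      · exact hvx h1
      · exact hvy h1
    refine reach_trans (fun p q h => ?_) hr
    rw [deleteEdges, sdiff_adj] at h
    rcases hadjH p q h.1 with ⟨hpqG, _, _⟩ | hpq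
    · have hne : s(p, q) ≠ s(x, y) := fun hne =>
        h.2 (by rw [fromEdgeSet_adj]; exact ⟨hne, hpqG.ne⟩)
      exact (sdiff_single_adj hpqG hne).reachable
    · rcases Sym2.eq_iff.1 hpq with ⟨rfl, rfl⟩ | ⟨rfl, rfl⟩
      · have h1 : (G \ fromEdgeSet {s(x, y)}).Adj p v :=
          sdiff_single_adj ha.symm (by rw [Sym2.eq_swap]; exact hvne p)
        have h2 : (G \ fromEdgeSet {s(x, y)}).Adj v q := sdiff_single_adj hb (hvne q)
        exact h1.reachable.trans h2.reachable
      · have h1 : (G \ fromEdgeSet {s(x, y)}).Adj p v :=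
          sdiff_single_adj hb.symm (by rw [Sym2.eq_swap]; exact hvne p)
        have h2 : (G \ fromEdgeSet {s(x, y)}).Adj v q := sdiff_single_adj ha (hvne q)
        exact h1.reachable.trans h2.reachable
  · have hGb := (isAcyclic_iff_forall_adj_isBridge.1 hG) ha
    rw [isBridge_iff] at hGb
    apply hGb
    have hr' : (G \ fromEdgeSet {s(v, a)}).Reachable x y := by
      refine reach_trans (fun p q h => ?_) hr
      rw [deleteEdges, sdiff_adj] at h
      rcases hadjH p q h.1 with ⟨hpqG, hvp, hvq⟩ | hpq
      · refine (sdiff_single_adj hpqG fun hne => ?_).reachable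
        rw [Sym2.eq_iff] at hne
        rcases hne with ⟨h1, _⟩ | ⟨_, h2⟩
        · exact hvp h1.symm
        · exact hvq h2.symm
      · exfalso
        apply h.2
        rw [fromEdgeSet_adj]
        exact ⟨by rw [hpq, ← hxyab]; rfl, (h.1).ne⟩
    have hvb : (G \ fromEdgeSet {s(v, a)}).Adj v b := by
      refine sdiff_single_adj hb fun h => ?_
      rw [Sym2.eq_iff] at h
      rcases h with ⟨_, h2⟩ | ⟨h1, _⟩
      · exact hab h2.symm
      · exact ha.ne h1
    rcases Sym2.eq_iff.1 hxyab with ⟨rfl, rfl⟩ | ⟨rfl, rfl⟩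
    · exact hvb.reachable.trans hr'.symm
    · exact hvb.reachable.trans hr'

private lemma projStep_acyclic {X : Set V} {G H : SimpleGraph V} (hs : ProjStep X G H)
    (hG : G.IsAcyclic) : H.IsAcyclic := by
  cases hs with
  | deleteLeaf v hv hdeg => exact acyclic_deleteLeaf v hG
  | smooth v a b hv hdeg ha hb hab => exact acyclic_smooth ha hb hab hG

private def retract (R : Setoid V) (f : V → V) : Setoid V :=
  ⟨fun x y => R.r (f x) (f y),
    ⟨fun _ => R.iseqv.refl _, fun h => R.iseqv.symm h, fun h h' => R.iseqv.trans h h'⟩⟩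

private lemma step_count [Fintype V] {X : Set V} {G H : SimpleGraph V}
    (hs : ProjStep X G H) (hG : G.IsAcyclic) (R : Setoid V) :
    ∃ R' : Setoid V, (crossingEdges G R').ncard ≤ (crossingEdges H R).ncard ∧
      ∀ x ∈ X, ∀ y ∈ X, (R'.r x y ↔ R.r x y) := by
  classical
  cases hs with
  | deleteLeaf v hv hdeg =>
    obtain ⟨u, hu⟩ := Set.ncard_eq_one.1 hdeg
    have hvu : G.Adj v u := by
      have : u ∈ G.neighborSet v := by rw [hu]; exact Set.mem_singleton u
      exact this
    have hnb : ∀ q, G.Adj v q → q = u := by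
      intro q h
      have : q ∈ G.neighborSet v := h
      rw [hu] at this
      exact this
    refine ⟨retract R (fun x => if x = v then u else x),
      Set.ncard_le_ncard ?_ (Set.toFinite _), ?_⟩
    · rintro e ⟨he, p, q, rfl, hnr⟩
      have hadj : G.Adj p q := he
      have hvp : p ≠ v := by
        intro hpv
        have hq : q = u := hnb q (hpv ▸ hadj)
        apply hnr
        show R.r (if p = v then u else p) (if q = v then u else q)
        rw [if_pos hpv, if_neg (fun h => hvu.ne' (hq.symm.trans h)), hq]
      have hvq : q ≠ v := by
        intro hqv
        have hp : p = u := hnb p (hqv ▸ hadj.symm)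
        apply hnr
        show R.r (if p = v then u else p) (if q = v then u else q)
        rw [if_neg (fun h => hvu.ne' (hp.symm.trans h)), if_pos hqv, hp]
      refine ⟨?_, p, q, rfl, ?_⟩
      · rw [edgeSet_fromEdgeSet]
        refine ⟨⟨he, ?_⟩, ?_⟩
        · intro hm
          rw [Set.mem_setOf_eq, Sym2.mem_iff] at hm
          rcases hm with rfl | rfl
          · exact hvp rfl
          · exact hvq rfl
        · simp [hadj.ne]
      · intro h
        exact hnr (show R.r (if p = v then u else p) (if q = v then u else q) by
          rw [if_neg hvp, if_neg hvq]; exact h)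
    · intro x hx y hy
      have hxv : x ≠ v := fun h => hv (h ▸ hx)
      have hyv : y ≠ v := fun h => hv (h ▸ hy)
      show R.r (if x = v then u else x) (if y = v then u else y) ↔ R.r x y
      rw [if_neg hxv, if_neg hyv]
  | smooth v a b hv hdeg ha hb hab =>
    have hnadj := not_adj_of_acyclic ha hb hab hG
    have hnbhd : G.neighborSet v = {a, b} := by
      refine (Set.eq_of_subset_of_ncard_le ?_ ?_ (Set.toFinite _)).symm
      · rintro x (rfl | rfl)
        · exact ha
        · exact hb
      · rw [hdeg, Set.ncard_pair hab]
    have hnb : ∀ q, G.Adj v q → q = a ∨ q = b := by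
      intro q h
      have : q ∈ G.neighborSet v := h
      rw [hnbhd] at this
      exact this
    refine ⟨retract R (fun x => if x = v then a else x),
      Set.ncard_le_ncard_of_injOn (fun e => if e = s(v, b) then s(a, b) else e)
        ?_ ?_ (Set.toFinite _), ?_⟩
    · rintro e ⟨he, p, q, rfl, hnr⟩
      have hadj : G.Adj p q := he
      by_cases hevb : s(p, q) = s(v, b)
      · rw [if_pos hevb]
        have hgab : ¬ R.r a b := by
          rcases Sym2.eq_iff.1 hevb with ⟨hp, hq⟩ | ⟨hp, hq⟩
          · intro h
            apply hnr
            show R.r (if p = v then a else p) (if q = v then a else q)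
            rw [if_pos hp, if_neg (fun hh => hb.ne' (hq.symm.trans hh)), hq]
            exact h
          · intro h
            apply hnr
            show R.r (if p = v then a else p) (if q = v then a else q)
            rw [if_neg (fun hh => hb.ne' (hp.symm.trans hh)), if_pos hq, hp]
            exact R.iseqv.symm h
        refine ⟨?_, a, b, rfl, hgab⟩
        rw [edgeSet_fromEdgeSet]
        exact ⟨Or.inr rfl, by simp [hab]⟩
      · rw [if_neg hevb]
        have hvp : p ≠ v := by
          intro hpv
          rcases hnb q (hpv ▸ hadj) with hq | hq
          · apply hnr
            show R.r (if p = v then a else p) (if q = v then a else q)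
            rw [if_pos hpv, if_neg (fun hh => ha.ne' (hq.symm.trans hh)), hq]
          · exact hevb (by rw [hpv, hq])
        have hvq : q ≠ v := by
          intro hqv
          rcases hnb p (hqv ▸ hadj.symm) with hp | hp
          · apply hnr
            show R.r (if p = v then a else p) (if q = v then a else q)
            rw [if_neg (fun hh => ha.ne' (hp.symm.trans hh)), if_pos hqv, hp]
          · exact hevb (by rw [hp, hqv]; exact Sym2.eq_swap)
        refine ⟨?_, p, q, rfl, ?_⟩
        · rw [edgeSet_fromEdgeSet]
          refine ⟨Or.inl ⟨he, ?_⟩, ?_⟩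
          · intro hm
            rw [Set.mem_setOf_eq, Sym2.mem_iff] at hm
            rcases hm with rfl | rfl
            · exact hvp rfl
            · exact hvq rfl
          · simp [hadj.ne]
        · intro h
          exact hnr (show R.r (if p = v then a else p) (if q = v then a else q) by
            rw [if_neg hvp, if_neg hvq]; exact h)
    · rintro e1 he1 e2 he2 hgeq
      dsimp only at hgeq
      by_cases h1 : e1 = s(v, b) <;> by_cases h2 : e2 = s(v, b)
      · rw [h1, h2]
      · rw [if_pos h1, if_neg h2] at hgeq
        exfalso
        obtain ⟨hm, -⟩ := he2
        rw [← hgeq] at hm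
        exact hnadj hm
      · rw [if_neg h1, if_pos h2] at hgeq
        exfalso
        obtain ⟨hm, -⟩ := he1
        rw [hgeq] at hm
        exact hnadj hm
      · rw [if_neg h1, if_neg h2] at hgeq
        exact hgeq
    · intro x hx y hy
      have hxv : x ≠ v := fun h => hv (h ▸ hx)
      have hyv : y ≠ v := fun h => hv (h ▸ hy)
      show R.r (if x = v then a else x) (if y = v then a else y) ↔ R.r x y
      rw [if_neg hxv, if_neg hyv]

end Aux

theorem stmt_6 {V : Type} [Fintype V] (X : Set V) (T T'' : SimpleGraph V) (hT : T.IsTree)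
    (hreach : Relation.ReflTransGen (ProjStep X) T T'')
    (hnf : ∀ H, ¬ ProjStep X T'' H)
    (c : ℕ) (R : Setoid V) (hc : (crossingEdges T'' R).ncard ≤ c) :
    ∃ R' : Setoid V, (crossingEdges T R').ncard ≤ c ∧
      ∀ x ∈ X, ∀ y ∈ X, (R'.r x y ↔ R.r x y) := by
  suffices h : ∀ G : SimpleGraph V, Relation.ReflTransGen (ProjStep X) G T'' → G.IsAcyclic →
      ∃ R' : Setoid V, (crossingEdges G R').ncard ≤ (crossingEdges T'' R).ncard ∧
        ∀ x ∈ X, ∀ y ∈ X, (R'.r x y ↔ R.r x y) by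
    obtain ⟨R', h1, h2⟩ := h T hreach hT.IsAcyclic
    exact ⟨R', h1.trans hc, h2⟩
  intro G hreach'
  induction hreach' using Relation.ReflTransGen.head_induction_on with
  | refl => exact fun _ => ⟨R, le_rfl, fun x _ y _ => Iff.rfl⟩
  | head hstep htail ih =>
    intro hac
    obtain ⟨R₁, hR₁, ha₁⟩ := ih (projStep_acyclic hstep hac)
    obtain ⟨R₂, hR₂, ha₂⟩ := step_count hstep hac R₁
    exact ⟨R₂, hR₂.trans hR₁, fun x hx y hy => (ha₂ x hx y hy).trans (ha₁ x hx y hy)⟩
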